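/- Let k be a field of characteristic zero and let I be an ideal of k[x_1,...,x_n] contained in the maximal ideal m = (x_1,...,x_n). For a polynomial P, define f • P as the result of applying the constant-coefficient differential operator f(∂/∂x_1,...,∂/∂x_n) to P. Then the set {P ∈ k[x] : ∀ f ∈ I, P • f ∈ m} is equal to the set {P ∈ k[x] : ∀ f ∈ I, f • P = 0}. -/

import Mathlib

open MvPolynomial

noncomputable section

open Classical in
/-- Apply the constant-coefficient differential operator `f(∂)` to `P`. -/
def diffApply {k σ : Type*} [CommSemiring k] (f P : MvPolynomial σ k) :
    MvPolynomial σ k :=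
  ∑ d ∈ f.support, ∑ e ∈ P.support,
    if d ≤ e then
      monomial (e - d)
        (f.coeff d * P.coeff e * ∏ i ∈ d.support, ((e i).descFactorial (d i) : k))
    else 0

section Aux

open Classical

variable {k σ : Type*} [CommSemiring k]

/-- `∏ d i !` as an element of `k`. -/
def factK (d : σ →₀ ℕ) : k := ∏ i ∈ d.support, ((d i).factorial : k)

lemma coeff_diffApply (f P : MvPolynomial σ k) (u : σ →₀ ℕ) :
    coeff u (diffApply f P) =
      ∑ d ∈ f.support, f.coeff d * P.coeff (d + u) *
        ∏ i ∈ d.support, (((d + u) i).descFactorial (d i) : k) := by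
  unfold diffApply
  rw [coeff_sum]
  refine Finset.sum_congr rfl fun d _ => ?_
  rw [coeff_sum]
  have hstep : ∀ e ∈ P.support,
      coeff u (if d ≤ e then
        monomial (e - d)
          (f.coeff d * P.coeff e * ∏ i ∈ d.support, ((e i).descFactorial (d i) : k))
        else 0)
      = if e = d + u then
          f.coeff d * P.coeff e * ∏ i ∈ d.support, ((e i).descFactorial (d i) : k)
        else 0 := by
    intro e _
    by_cases he : e = d + u
    · subst he
      rw [if_pos (le_add_right le_rfl), coeff_monomial, if_pos (add_tsub_cancel_left d u),
        if_pos rfl]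
    · rw [if_neg he]
      by_cases hle : d ≤ e
      · rw [if_pos hle, coeff_monomial, if_neg]
        intro h
        exact he (by rw [← tsub_add_cancel_of_le hle, h, add_comm])
      · rw [if_neg hle, coeff_zero]
  rw [Finset.sum_congr rfl hstep, Finset.sum_ite_eq' P.support (d + u)]
  split_ifs with h
  · rfl
  · rw [notMem_support_iff.mp h, mul_zero, zero_mul]

lemma coeff_zero_diffApply (f P : MvPolynomial σ k) (S : Finset (σ →₀ ℕ))
    (hS : f.support ⊆ S) :
    coeff 0 (diffApply f P) = ∑ d ∈ S, f.coeff d * P.coeff d * factK d := by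
  rw [coeff_diffApply]
  have : ∀ d ∈ f.support, f.coeff d * P.coeff (d + 0) *
      ∏ i ∈ d.support, (((d + 0) i).descFactorial (d i) : k)
      = f.coeff d * P.coeff d * factK d := by
    intro d _
    simp [factK, Nat.descFactorial_self]
  rw [Finset.sum_congr rfl this]
  refine Finset.sum_subset hS fun d _ hd => ?_
  rw [notMem_support_iff.mp hd, zero_mul, zero_mul]

lemma coeff_zero_diffApply_symm (f P : MvPolynomial σ k) :
    coeff 0 (diffApply f P) = coeff 0 (diffApply P f) := by
  rw [coeff_zero_diffApply f P (f.support ∪ P.support) Finset.subset_union_left,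
    coeff_zero_diffApply P f (f.support ∪ P.support) Finset.subset_union_right]
  exact Finset.sum_congr rfl fun d _ => by ring

lemma factK_add (u d : σ →₀ ℕ) :
    (factK (u + d) : k) = factK u * ∏ i ∈ d.support, (((d + u) i).descFactorial (d i) : k) := by
  have h1 : (factK (u + d) : k) = ∏ i ∈ u.support ∪ d.support, (((u + d) i).factorial : k) := by
    refine Finset.prod_subset Finsupp.support_add (fun i _ hi => ?_)
    rw [Finsupp.notMem_support_iff.mp hi]
    simp
  have h2 : (factK u : k) = ∏ i ∈ u.support ∪ d.support, ((u i).factorial : k) := by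
    refine Finset.prod_subset Finset.subset_union_left (fun i _ hi => ?_)
    rw [Finsupp.notMem_support_iff.mp hi]
    simp
  have h3 : (∏ i ∈ d.support, (((d + u) i).descFactorial (d i) : k))
      = ∏ i ∈ u.support ∪ d.support, (((d + u) i).descFactorial (d i) : k) := by
    refine Finset.prod_subset Finset.subset_union_right (fun i _ hi => ?_)
    rw [Finsupp.notMem_support_iff.mp hi]
    simp
  rw [h1, h2, h3, ← Finset.prod_mul_distrib]
  refine Finset.prod_congr rfl fun i _ => ?_
  rw [← Nat.cast_mul]
  congr 1
  have := Nat.factorial_mul_descFactorial (n := d i + u i) (k := d i) (Nat.le_add_right _ _)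
  simpa [Finsupp.add_apply, add_comm (u i) (d i), Nat.add_sub_cancel_left] using this.symm

lemma coeff_zero_diffApply_monomial_mul (f P : MvPolynomial σ k) (u : σ →₀ ℕ) :
    coeff 0 (diffApply (monomial u 1 * f) P) = factK u * coeff u (diffApply f P) := by
  have hsub : (monomial u (1 : k) * f).support ⊆ f.support.image (u + ·) := by
    intro c hc
    rw [mem_support_iff, coeff_monomial_mul'] at hc
    split_ifs at hc with hle
    · rw [one_mul] at hc
      refine Finset.mem_image.mpr ⟨c - u, mem_support_iff.mpr hc, ?_⟩
      rw [add_tsub_cancel_of_le hle]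
    · exact absurd rfl hc
  rw [coeff_zero_diffApply _ P _ hsub, coeff_diffApply, Finset.mul_sum,
    Finset.sum_image (fun a _ b _ h => by simpa using (add_right_injective u h))]
  refine Finset.sum_congr rfl fun d _ => ?_
  have hc : (monomial u (1 : k) * f).coeff (u + d) = f.coeff d := by
    rw [coeff_monomial_mul, one_mul]
  rw [hc, factK_add u d, add_comm d u]
  ring

lemma mem_span_range_X_iff {g : MvPolynomial σ k} :
    g ∈ Ideal.span (Set.range (X : σ → MvPolynomial σ k)) ↔ coeff 0 g = 0 := by
  rw [← Set.image_univ, mem_ideal_span_X_image]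
  constructor
  · intro h
    by_contra h0
    obtain ⟨i, _, hi⟩ := h 0 (mem_support_iff.mpr h0)
    exact hi rfl
  · intro h m hm
    have hm0 : m ≠ 0 := fun h' => (mem_support_iff.mp hm) (h' ▸ h)
    obtain ⟨i, hi⟩ := Finsupp.ne_iff.mp hm0
    exact ⟨i, Set.mem_univ i, hi⟩

end Aux

/-- for an ideal `I` contained in the maximal ideal `m = (x_1, …, x_n)`,
the set `{P : ∀ f ∈ I, P • f ∈ m}` equals the set `{P : ∀ f ∈ I, f • P = 0}`. -/
theorem stmt0 {k : Type*} [Field k] [CharZero k] (n : ℕ)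
    (I : Ideal (MvPolynomial (Fin n) k))
    (hI : I ≤ Ideal.span (Set.range (X : Fin n → MvPolynomial (Fin n) k))) :
    { P : MvPolynomial (Fin n) k |
        ∀ f ∈ I, diffApply P f ∈ Ideal.span (Set.range (X : Fin n → MvPolynomial (Fin n) k)) }
      = { P : MvPolynomial (Fin n) k | ∀ f ∈ I, diffApply f P = 0 } := by
  ext P
  simp only [Set.mem_setOf_eq]
  constructor
  · intro h f hf
    ext u
    have hmem : monomial u (1 : k) * f ∈ I := Ideal.mul_mem_left I _ hf
    have h0 := mem_span_range_X_iff.mp (h _ hmem)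
    rw [← coeff_zero_diffApply_symm, coeff_zero_diffApply_monomial_mul] at h0
    have hfact : (factK u : k) ≠ 0 := by
      refine Finset.prod_ne_zero_iff.mpr fun i _ => ?_
      exact_mod_cast Nat.factorial_ne_zero (u i)
    rw [coeff_zero]
    exact (mul_eq_zero.mp h0).resolve_left hfact
  · intro h f hf
    rw [mem_span_range_X_iff, ← coeff_zero_diffApply_symm, h f hf, coeff_zero]
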